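/- Let 𝒰 be a non-principal ultrafilter on ℕ, let R be a commutative ring, and for each m ∈ ℕ let 𝔞_m, 𝔟_m ⊆ R be ideals. Suppose there is an integer l > 0 such that each 𝔞_m is generated by at most l elements. Then in the ultrapower ring R* := (∏_m R)/∼_𝒰, the product of the ideals ulim_m 𝔞_m and ulim_m 𝔟_m equals ulim_m (𝔞_m · 𝔟_m). -/

import Mathlib

open Filter


/-- The ultraproduct `ulim_m 𝔞_m` of a family of ideals `𝔞_m ⊆ R`, as an ideal of the
ultrapower `R* = (∏_m R)/∼_𝒰`, realized as the germ ring at the ultrafilter `𝒰`. -/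
def ulimIdeal {R : Type*} [CommRing R] (𝒰 : Ultrafilter ℕ) (a : ℕ → Ideal R) :
    Ideal ((𝒰 : Filter ℕ).Germ R) where
  carrier := {x | ∃ f : ℕ → R, (∀ᶠ m in (𝒰 : Filter ℕ), f m ∈ a m) ∧ x = Filter.Germ.ofFun f}
  zero_mem' := ⟨0, Filter.Eventually.of_forall fun m => (a m).zero_mem, rfl⟩
  add_mem' := by
    rintro x y ⟨f, hf, rfl⟩ ⟨g, hg, rfl⟩
    exact ⟨f + g, (hf.and hg).mono fun m h => (a m).add_mem h.1 h.2, rfl⟩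
  smul_mem' := by
    intro c x hx
    obtain ⟨f, hf, rfl⟩ := hx
    refine Filter.Germ.inductionOn c fun g => ?_
    exact ⟨g * f, hf.mono fun m h => (a m).mul_mem_left _ h, rfl⟩


/-- Length-`l` representation of elements of `I * J` when `I` is generated by `≤ l` elements. -/
lemma exists_rep {R : Type*} [CommRing R] {I J : Ideal R} {l : ℕ} {S : Finset R}
    (hcard : S.card ≤ l) (hspan : Ideal.span (S : Set R) = I)
    {x : R} (hx : x ∈ I * J) :
    ∃ a b : Fin l → R, (∀ i, a i ∈ I) ∧ (∀ i, b i ∈ J) ∧ x = ∑ i, a i * b i := by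
  classical
  set s : Fin l → R := fun i =>
    if h : (i : ℕ) < S.toList.length then S.toList.get ⟨i, h⟩ else 0 with hs
  have hsI : ∀ i, s i ∈ I := by
    intro i
    rw [hs]
    dsimp only
    split_ifs with h
    · rw [← hspan]
      refine Ideal.subset_span ?_
      have := List.get_mem S.toList ⟨i, h⟩
      exact Finset.mem_coe.mpr (Finset.mem_toList.mp this)
    · exact I.zero_mem
  have hspan' : Ideal.span (Set.range s) = I := by
    apply le_antisymm
    · rw [Ideal.span_le]
      rintro _ ⟨i, rfl⟩
      exact hsI i
    · rw [← hspan, Ideal.span_le]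
      intro t ht
      have : t ∈ S.toList := by simpa using ht
      obtain ⟨j, hj, rfl⟩ := List.get_of_mem this
      have hjl : (j : ℕ) < l := lt_of_lt_of_le (by simpa using j.2) (by simpa using hcard)
      apply Ideal.subset_span
      refine ⟨⟨j, hjl⟩, ?_⟩
      show s ⟨j, hjl⟩ = _
      rw [hs]
      dsimp only
      rw [dif_pos (by simpa using j.2)]
  suffices h : ∃ b : Fin l → R, (∀ i, b i ∈ J) ∧ x = ∑ i, s i * b i by
    obtain ⟨b, hb, hxb⟩ := h
    exact ⟨s, b, hsI, hb, hxb⟩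
  refine Submodule.mul_induction_on hx ?_ ?_
  · intro a ha c hc
    rw [← hspan'] at ha
    obtain ⟨f, hf⟩ := (Submodule.mem_span_range_iff_exists_fun R).mp ha
    refine ⟨fun i => f i * c, fun i => J.mul_mem_left _ hc, ?_⟩
    rw [← hf, Finset.sum_mul]
    exact Finset.sum_congr rfl fun i _ => by rw [smul_eq_mul]; ring
  · rintro x y ⟨b, hb, rfl⟩ ⟨b', hb', rfl⟩
    exact ⟨b + b', fun i => J.add_mem (hb i) (hb' i), by
      rw [← Finset.sum_add_distrib]; exact Finset.sum_congr rfl fun i _ => by simp [mul_add]⟩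

lemma ofFun_sum {α R : Type*} [CommRing R] (L : Filter α) {ι : Type*} (s : Finset ι)
    (g : ι → α → R) :
    (Filter.Germ.ofFun (fun m => ∑ i ∈ s, g i m) : L.Germ R) = ∑ i ∈ s, Filter.Germ.ofFun (g i) := by
  classical
  induction s using Finset.induction_on with
  | empty => simp; rfl
  | @insert j s hj ih =>
    simp only [Finset.sum_insert hj]
    rw [← ih]
    rfl

theorem ulimIdeal_mul {R : Type*} [CommRing R] (𝒰 : Ultrafilter ℕ)
    (h𝒰 : ∀ A : Set ℕ, A.Finite → A ∉ 𝒰)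
    (𝔞 𝔟 : ℕ → Ideal R) (l : ℕ) (hl : 0 < l)
    (hgen : ∀ m, ∃ S : Finset R, S.card ≤ l ∧ Ideal.span (S : Set R) = 𝔞 m) :
    ulimIdeal 𝒰 𝔞 * ulimIdeal 𝒰 𝔟 = ulimIdeal 𝒰 (fun m => 𝔞 m * 𝔟 m) := by
  classical
  apply le_antisymm
  · rw [Ideal.mul_le]
    rintro x ⟨f, hf, rfl⟩ y ⟨g, hg, rfl⟩
    exact ⟨f * g, (hf.and hg).mono fun m h => Ideal.mul_mem_mul h.1 h.2, rfl⟩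
  · rintro x ⟨f, hf, rfl⟩
    choose S hS hSspan using hgen
    have key : ∀ m, ∃ a b : Fin l → R, (∀ i, a i ∈ 𝔞 m) ∧ (∀ i, b i ∈ 𝔟 m) ∧
        (f m ∈ 𝔞 m * 𝔟 m → f m = ∑ i, a i * b i) := by
      intro m
      by_cases h : f m ∈ 𝔞 m * 𝔟 m
      · obtain ⟨a, b, ha, hb, hab⟩ := exists_rep (hS m) (hSspan m) h
        exact ⟨a, b, ha, hb, fun _ => hab⟩
      · exact ⟨0, 0, fun i => zero_mem _, fun i => zero_mem _, fun h' => absurd h' h⟩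
    choose a b ha hb hab using key
    have hx : (Filter.Germ.ofFun f : (𝒰 : Filter ℕ).Germ R) =
        ∑ i : Fin l, Filter.Germ.ofFun (fun m => a m i) * Filter.Germ.ofFun (fun m => b m i) := by
      have h1 : (Filter.Germ.ofFun f : (𝒰 : Filter ℕ).Germ R) =
          Filter.Germ.ofFun (fun m => ∑ i : Fin l, a m i * b m i) := by
        apply Quotient.sound
        exact hf.mono fun m hm => hab m hm
      rw [h1, ofFun_sum]
      exact Finset.sum_congr rfl fun i _ => rfl
    rw [hx]
    refine Ideal.sum_mem _ fun i _ => Ideal.mul_mem_mul ?_ ?_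
    · exact ⟨fun m => a m i, Filter.Eventually.of_forall fun m => ha m i, rfl⟩
    · exact ⟨fun m => b m i, Filter.Eventually.of_forall fun m => hb m i, rfl⟩
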